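/- arXiv:1507.06391 — 7 statements merged into one kernel-verified Lean document; each statement's English description precedes it below -/
import Mathlib

section
/- Let r ≥ 2 be an integer, let m_1, …, m_r be nonnegative real numbers, and let n_1 ≥ n_2 ≥ … ≥ n_r > 0 be integers with n_1 ≥ 2. Assume that if r = 2 then (n_1, n_2) ≠ (2, 2). Then ((r+3)/(r+2)) · (Σ_{i=1}^r m_i²) · (Σ_{i=1}^r n_i² − n_r) ≥ (Σ_{i=1}^r m_i n_i)². -/
/-- Lemma 2.2 of the paper (non-strict part): for `r ≥ 2`, nonnegative reals
`m_1, …, m_r` and integers `n_1 ≥ n_2 ≥ … ≥ n_r > 0` with `n_1 ≥ 2`, assuming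
`(n_1, n_2) ≠ (2, 2)` when `r = 2`, we have
`((r+3)/(r+2)) · (Σ m_i²) · (Σ n_i² − n_r) ≥ (Σ m_i n_i)²`. -/
theorem stmt_0 (r : ℕ) (hr : 2 ≤ r) (m : ℕ → ℝ) (n : ℕ → ℤ)
    (hm : ∀ i ∈ Finset.Icc 1 r, 0 ≤ m i)
    (hmono : ∀ i j, 1 ≤ i → i ≤ j → j ≤ r → n j ≤ n i)
    (hpos : ∀ i ∈ Finset.Icc 1 r, 0 < n i)
    (hn1 : 2 ≤ n 1)
    (hr2 : r = 2 → ¬(n 1 = 2 ∧ n 2 = 2)) :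
    ((r : ℝ) + 3) / ((r : ℝ) + 2) * (∑ i ∈ Finset.Icc 1 r, (m i) ^ 2) *
        ((∑ i ∈ Finset.Icc 1 r, ((n i : ℝ)) ^ 2) - (n r : ℝ)) ≥
      (∑ i ∈ Finset.Icc 1 r, m i * (n i : ℝ)) ^ 2 := by
  set s := Finset.Icc 1 r with hs
  have h1r : (1 : ℕ) ∈ s := by simp [hs]; omega
  have hrr : r ∈ s := by simp [hs]; omega
  have hnr : 0 < n r := hpos r hrr
  have hnri : ∀ i ∈ s, n r ≤ n i := by
    intro i hi
    simp only [hs, Finset.mem_Icc] at hi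
    exact hmono i r hi.1 hi.2 le_rfl
  have hcard : s.card = r := by simp [hs]
  -- Key integer estimate
  have key : ((r : ℤ) + 3) * n r ≤ ∑ i ∈ s, (n i) ^ 2 := by
    by_cases hone : n r = 1
    · -- n r = 1
      have hsplit : ∑ i ∈ s, (n i) ^ 2 = n 1 ^ 2 + ∑ i ∈ s.erase 1, (n i) ^ 2 :=
        (Finset.add_sum_erase s _ h1r).symm
      have hlow : ((s.erase 1).card : ℤ) * 1 ≤ ∑ i ∈ s.erase 1, (n i) ^ 2 := by
        have := Finset.card_nsmul_le_sum (s.erase 1) (fun i => (n i)^2) 1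
          (fun i hi => by have := hpos i (Finset.mem_of_mem_erase hi); show (1:ℤ) ≤ n i ^ 2; nlinarith)
        simpa [nsmul_eq_mul] using this
      have hcard' : (s.erase 1).card = r - 1 := by
        rw [Finset.card_erase_of_mem h1r, hcard]
      rw [hcard'] at hlow
      have : ((r - 1 : ℕ) : ℤ) = (r : ℤ) - 1 := by
        have : 1 ≤ r := by omega
        push_cast [this]; ring
      rw [this] at hlow
      rw [hsplit, hone]
      nlinarith
    · -- n r ≥ 2
      have h2 : 2 ≤ n r := by omega
      have hterm : ∀ i ∈ s, 2 * n r ≤ (n i) ^ 2 := by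
        intro i hi
        have h1 := hnri i hi
        nlinarith
      have hsum : (s.card : ℤ) * (2 * n r) ≤ ∑ i ∈ s, (n i) ^ 2 := by
        have := Finset.card_nsmul_le_sum s (fun i => (n i)^2) (2 * n r)
          (fun i hi => by show 2 * n r ≤ n i ^ 2; exact hterm i hi)
        simpa [nsmul_eq_mul] using this
      rw [hcard] at hsum
      rcases Nat.lt_or_ge r 3 with h3 | h3
      · -- r = 2
        have hr2' : r = 2 := by omega
        subst hr2'
        have hset : s = {1, 2} := by rw [hs]; decide
        have hsum2 : ∑ i ∈ s, (n i) ^ 2 = n 1 ^ 2 + n 2 ^ 2 := by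
          rw [hset]; simp [Finset.sum_insert, Finset.mem_singleton]
        have hmono12 : n 2 ≤ n 1 := hmono 1 2 le_rfl (by norm_num) le_rfl
        have hne := hr2 rfl
        rw [hsum2]
        push_cast
        rcases eq_or_lt_of_le h2 with heq | hlt
        · have hn1ne : n 1 ≠ 2 := fun h => hne ⟨h, heq.symm⟩
          have : 3 ≤ n 1 := by omega
          nlinarith
        · nlinarith
      · -- r ≥ 3
        have : (r : ℤ) + 3 ≤ 2 * r := by
          have : (3 : ℤ) ≤ r := by exact_mod_cast h3
          linarith
        nlinarith
  -- Real-number conclusion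
  have hA : (0:ℝ) ≤ ∑ i ∈ s, (m i) ^ 2 := Finset.sum_nonneg fun i _ => sq_nonneg _
  have cauchy : (∑ i ∈ s, m i * (n i : ℝ)) ^ 2 ≤
      (∑ i ∈ s, (m i) ^ 2) * (∑ i ∈ s, ((n i : ℝ)) ^ 2) :=
    Finset.sum_mul_sq_le_sq_mul_sq s m fun i => (n i : ℝ)
  have keyR : ((r : ℝ) + 3) * (n r : ℝ) ≤ ∑ i ∈ s, ((n i : ℝ)) ^ 2 := by
    have := key
    have hcast : ((∑ i ∈ s, (n i) ^ 2 : ℤ) : ℝ) = ∑ i ∈ s, ((n i : ℝ)) ^ 2 := by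
      push_cast; rfl
    calc ((r : ℝ) + 3) * (n r : ℝ) = (((r : ℤ) + 3) * n r : ℤ) := by push_cast; ring
      _ ≤ ((∑ i ∈ s, (n i) ^ 2 : ℤ) : ℝ) := by exact_mod_cast key
      _ = _ := hcast
  set S := ∑ i ∈ s, ((n i : ℝ)) ^ 2 with hS
  set A := ∑ i ∈ s, (m i) ^ 2 with hA'
  have hr2pos : (0:ℝ) < (r : ℝ) + 2 := by positivity
  rw [ge_iff_le, div_mul_eq_mul_div, div_mul_eq_mul_div, le_div_iff₀ hr2pos]
  -- goal: B^2 * (r+2) ≤ (r+3) * A * (S - n r)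
  have h1 : ((r:ℝ) + 2) * S ≤ ((r:ℝ) + 3) * (S - (n r : ℝ)) := by linarith
  nlinarith [mul_le_mul_of_nonneg_left h1 hA, cauchy]
end

section
/- Let r ≥ 2 be an integer, let m_1, …, m_r be nonnegative real numbers not all zero, and let n_1 ≥ n_2 ≥ … ≥ n_r > 0 be integers with n_1 ≥ 2. Assume that if r = 2 then (n_1, n_2) ≠ (2, 2), that (n_1, n_2, …, n_r) ≠ (2, 1, …, 1), and that it is not the case that r = 3 and (n_1, n_2, n_3) = (2, 2, 2). Then ((r+3)/(r+2)) · (Σ_{i=1}^r m_i²) · (Σ_{i=1}^r n_i² − n_r) > (Σ_{i=1}^r m_i n_i)². -/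
lemma key_sum (r : ℕ) (hr : 2 ≤ r) (n : ℕ → ℤ)
    (hmono : ∀ i j, 1 ≤ i → i ≤ j → j ≤ r → n j ≤ n i)
    (hpos : ∀ i ∈ Finset.Icc 1 r, 0 < n i)
    (hn1 : 2 ≤ n 1)
    (hr2 : r = 2 → ¬(n 1 = 2 ∧ n 2 = 2))
    (hne21 : ¬(n 1 = 2 ∧ ∀ i, 2 ≤ i → i ≤ r → n i = 1))
    (hne222 : ¬(r = 3 ∧ n 1 = 2 ∧ n 2 = 2 ∧ n 3 = 2)) :
    ((r : ℤ) + 3) * n r < ∑ i ∈ Finset.Icc 1 r, n i ^ 2 := by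
  have h1r : (1 : ℕ) ∈ Finset.Icc 1 r := by simp [hr]; omega
  have h2r : (2 : ℕ) ∈ Finset.Icc 1 r := by simp [hr]
  have hrr : r ∈ Finset.Icc 1 r := by simp; omega
  have hnr1 : 1 ≤ n r := hpos r hrr
  have hn2r : n r ≤ n 2 := hmono 2 r (by norm_num) hr le_rfl
  have hn21 : n 2 ≤ n 1 := hmono 1 2 le_rfl (by norm_num) hr
  -- split the sum
  have hsplit : ∑ i ∈ Finset.Icc 1 r, n i ^ 2
      = n 1 ^ 2 + n 2 ^ 2 + ∑ i ∈ Finset.Icc 3 r, n i ^ 2 := by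
    have e1 : Finset.Icc 1 r = insert 1 (insert 2 (Finset.Icc 3 r)) := by
      ext x; simp; omega
    rw [e1, Finset.sum_insert (by simp), Finset.sum_insert (by simp), add_assoc]
  have htail : (r - 2 : ℤ) * n r ^ 2 ≤ ∑ i ∈ Finset.Icc 3 r, n i ^ 2 := by
    have : ∀ i ∈ Finset.Icc 3 r, n r ^ 2 ≤ n i ^ 2 := by
      intro i hi
      simp only [Finset.mem_Icc] at hi
      have h1 : n r ≤ n i := hmono i r (by omega) hi.2 le_rfl
      have h2 : 0 < n i := hpos i (by simp; omega)
      nlinarith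
    calc (r - 2 : ℤ) * n r ^ 2 = (Finset.Icc 3 r).card * n r ^ 2 := by
          rw [Nat.card_Icc]; push_cast; congr 1; omega
      _ = ∑ _i ∈ Finset.Icc 3 r, n r ^ 2 := by rw [Finset.sum_const, nsmul_eq_mul]
      _ ≤ _ := Finset.sum_le_sum this
  rw [hsplit]
  have hkey : ((r : ℤ) + 3) * n r < n 1 ^ 2 + n 2 ^ 2 + (r - 2 : ℤ) * n r ^ 2 := by
    have hrZ : (2 : ℤ) ≤ (r : ℤ) := by exact_mod_cast hr
    rcases lt_or_ge (n r) 2 with hc | hc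
    · -- n r = 1
      have hnr : n r = 1 := by omega
      rw [hnr]
      rcases lt_or_ge (n 1) 3 with h1c | h1c
      · -- n 1 = 2
        have hn1' : n 1 = 2 := by omega
        have : ¬ ∀ i, 2 ≤ i → i ≤ r → n i = 1 := fun h => hne21 ⟨hn1', h⟩
        push_neg at this
        obtain ⟨j, hj2, hjr, hjne⟩ := this
        have hjpos : 0 < n j := hpos j (by simp; omega)
        have hjle : n j ≤ n 2 := hmono 2 j (by norm_num) hj2 hjr
        have h22 : 2 ≤ n 2 := by omega
        rw [hn1']
        nlinarith [sq_nonneg (n 2 - 2)]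
      · have h12 : 1 ≤ n 2 := by omega
        nlinarith [sq_nonneg (n 1 - 3), sq_nonneg (n 2 - 1)]
    rcases lt_or_ge (n r) 3 with hc3 | hc3
    · -- n r = 2
      have hnr : n r = 2 := by omega
      rw [hnr]
      have h22 : 2 ≤ n 2 := by omega
      rcases lt_or_ge r 4 with hr4 | hr4
      · interval_cases r
        · -- r = 2
          have h2' := hr2 rfl
          have hn2 : n 2 = 2 := by omega
          have : n 1 ≠ 2 := fun h => h2' ⟨h, hn2⟩
          have : 3 ≤ n 1 := by omega
          nlinarith [sq_nonneg (n 1 - 3)]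
        · -- r = 3
          have hn3 : n 3 = 2 := by omega
          have : ¬ (n 1 = 2 ∧ n 2 = 2) := fun h => hne222 ⟨rfl, h.1, h.2, hn3⟩
          rcases lt_or_ge (n 1) 3 with h1c | h1c
          · have : n 2 = 2 := by omega
            omega
          · nlinarith [sq_nonneg (n 1 - 3), sq_nonneg (n 2 - 2)]
      · have : (4 : ℤ) ≤ (r : ℤ) := by exact_mod_cast hr4
        nlinarith [sq_nonneg (n 1 - 2), sq_nonneg (n 2 - 2), this]
    · -- n r ≥ 3
      have hA : n r ^ 2 ≤ n 1 ^ 2 := by nlinarith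
      have hB : n r ^ 2 ≤ n 2 ^ 2 := by nlinarith
      have hC : 3 * n r ≤ n r ^ 2 := by nlinarith
      have hD : ((r : ℤ) - 2) * (3 * n r) ≤ ((r : ℤ) - 2) * n r ^ 2 :=
        mul_le_mul_of_nonneg_left hC (by linarith)
      have hE : 0 < (2 * (r : ℤ) - 3) * n r :=
        mul_pos (by linarith) (by linarith)
      nlinarith [hA, hB, hD, hE]
  linarith

/-- Lemma 2.2 of the paper (strict part): for `r ≥ 2`, nonnegative reals
`m_1, …, m_r` not all zero, and integers `n_1 ≥ n_2 ≥ … ≥ n_r > 0` with `n_1 ≥ 2`,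
assuming `(n_1, n_2) ≠ (2, 2)` when `r = 2`, `(n_1, …, n_r) ≠ (2, 1, …, 1)`,
and not (`r = 3` and `(n_1, n_2, n_3) = (2, 2, 2)`), we have
`((r+3)/(r+2)) · (Σ m_i²) · (Σ n_i² − n_r) > (Σ m_i n_i)²`. -/
theorem stmt_1 (r : ℕ) (hr : 2 ≤ r) (m : ℕ → ℝ) (n : ℕ → ℤ)
    (hm : ∀ i ∈ Finset.Icc 1 r, 0 ≤ m i)
    (hm0 : ∃ i ∈ Finset.Icc 1 r, m i ≠ 0)
    (hmono : ∀ i j, 1 ≤ i → i ≤ j → j ≤ r → n j ≤ n i)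
    (hpos : ∀ i ∈ Finset.Icc 1 r, 0 < n i)
    (hn1 : 2 ≤ n 1)
    (hr2 : r = 2 → ¬(n 1 = 2 ∧ n 2 = 2))
    (hne21 : ¬(n 1 = 2 ∧ ∀ i, 2 ≤ i → i ≤ r → n i = 1))
    (hne222 : ¬(r = 3 ∧ n 1 = 2 ∧ n 2 = 2 ∧ n 3 = 2)) :
    ((r : ℝ) + 3) / ((r : ℝ) + 2) * (∑ i ∈ Finset.Icc 1 r, (m i) ^ 2) *
        ((∑ i ∈ Finset.Icc 1 r, ((n i : ℝ)) ^ 2) - (n r : ℝ)) >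
      (∑ i ∈ Finset.Icc 1 r, m i * (n i : ℝ)) ^ 2 := by
  have hZ := key_sum r hr n hmono hpos hn1 hr2 hne21 hne222
  set M : ℝ := ∑ i ∈ Finset.Icc 1 r, (m i) ^ 2 with hM
  set S : ℝ := ∑ i ∈ Finset.Icc 1 r, ((n i : ℝ)) ^ 2 with hS
  have hSg : ((r : ℝ) + 3) * (n r : ℝ) < S := by
    have : ((↑((r : ℤ) + 3) * n r : ℤ) : ℝ) < ((∑ i ∈ Finset.Icc 1 r, n i ^ 2 : ℤ) : ℝ) := by
      exact_mod_cast hZ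
    push_cast at this
    convert this using 1
  have hMpos : 0 < M := by
    obtain ⟨i, hi, hne⟩ := hm0
    have h1 : 0 < m i ^ 2 := by positivity
    have h2 : m i ^ 2 ≤ M :=
      Finset.single_le_sum (fun j _ => sq_nonneg (m j)) hi
    linarith
  have hCS : (∑ i ∈ Finset.Icc 1 r, m i * (n i : ℝ)) ^ 2 ≤ M * S :=
    Finset.sum_mul_sq_le_sq_mul_sq _ _ _
  have hr2' : (0 : ℝ) < (r : ℝ) + 2 := by positivity
  rw [gt_iff_lt, div_mul_eq_mul_div, div_mul_eq_mul_div, lt_div_iff₀ hr2']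
  nlinarith [hCS, hMpos, hSg, sq_nonneg (∑ i ∈ Finset.Icc 1 r, m i * (n i : ℝ))]
end

section
/- Let r ≥ 9 be an integer and let n_1 ≥ n_2 ≥ … ≥ n_r ≥ 3 be integers with n_1 > 11. Then ((3r+40)·r/(3r+39)) · (Σ_{i=1}^r n_i² − n_r) > (Σ_{i=1}^r n_i)². -/
lemma key_quad (r a t : ℝ) (hr : 9 ≤ r) (ha : 12 ≤ a) (ht : 3 ≤ t) :
    (3 * r + 40) * t < a ^ 2 + (r - 1) * t ^ 2 := by
  nlinarith [mul_nonneg (mul_nonneg (by linarith : (0:ℝ) ≤ r - 9) (by linarith : (0:ℝ) ≤ t))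
      (by linarith : (0:ℝ) ≤ t - 3), sq_nonneg (16 * t - 67),
    mul_nonneg (by linarith : (0:ℝ) ≤ a - 12) (by linarith : (0:ℝ) ≤ a + 12)]

/-- Lemma 2.10 of the paper: for `r ≥ 9` and integers `n_1 ≥ n_2 ≥ … ≥ n_r ≥ 3`
with `n_1 > 11`, we have
`((3r+40)·r/(3r+39)) · (Σ n_i² − n_r) > (Σ n_i)²`. -/
theorem stmt_3 (r : ℕ) (hr : 9 ≤ r) (n : ℕ → ℤ)
    (hmono : ∀ i j, 1 ≤ i → i ≤ j → j ≤ r → n j ≤ n i)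
    (h3 : ∀ i ∈ Finset.Icc 1 r, 3 ≤ n i)
    (hn1 : 11 < n 1) :
    (3 * (r : ℝ) + 40) * (r : ℝ) / (3 * (r : ℝ) + 39) *
        ((∑ i ∈ Finset.Icc 1 r, ((n i : ℝ)) ^ 2) - (n r : ℝ)) >
      (∑ i ∈ Finset.Icc 1 r, (n i : ℝ)) ^ 2 := by
  have hr1 : 1 ≤ r := by omega
  set S : ℝ := ∑ i ∈ Finset.Icc 1 r, ((n i : ℝ)) with hS
  set Q : ℝ := ∑ i ∈ Finset.Icc 1 r, ((n i : ℝ)) ^ 2 with hQ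
  have hcard : (Finset.Icc 1 r).card = r := by simp
  -- Cauchy–Schwarz
  have hCS : S ^ 2 ≤ (r : ℝ) * Q := by
    have := sq_sum_le_card_mul_sum_sq (s := Finset.Icc 1 r) (f := fun i => ((n i : ℝ)))
    simpa [hcard] using this
  -- lower bound on Q
  have h1mem : 1 ∈ Finset.Icc 1 r := by simp [hr1]
  have hrmem : r ∈ Finset.Icc 1 r := by simp [hr1]
  have ht3 : (3 : ℝ) ≤ (n r : ℝ) := by exact_mod_cast h3 r hrmem
  have ha12 : (12 : ℝ) ≤ (n 1 : ℝ) := by exact_mod_cast hn1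
  have hQge : (n 1 : ℝ) ^ 2 + ((r : ℝ) - 1) * (n r : ℝ) ^ 2 ≤ Q := by
    have hsplit : Q = (n 1 : ℝ) ^ 2 + ∑ i ∈ (Finset.Icc 1 r).erase 1, ((n i : ℝ)) ^ 2 := by
      rw [hQ, ← Finset.add_sum_erase _ _ h1mem]
    have hbound : ((r : ℝ) - 1) * (n r : ℝ) ^ 2
        ≤ ∑ i ∈ (Finset.Icc 1 r).erase 1, ((n i : ℝ)) ^ 2 := by
      have hc : ((Finset.Icc 1 r).erase 1).card = r - 1 := by
        rw [Finset.card_erase_of_mem h1mem, hcard]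
      calc ((r : ℝ) - 1) * (n r : ℝ) ^ 2
          = ∑ _i ∈ (Finset.Icc 1 r).erase 1, ((n r : ℝ)) ^ 2 := by
            rw [Finset.sum_const, hc, nsmul_eq_mul]
            have : ((r - 1 : ℕ) : ℝ) = (r : ℝ) - 1 := by
              push_cast [Nat.cast_sub hr1]; ring
            rw [this]
        _ ≤ ∑ i ∈ (Finset.Icc 1 r).erase 1, ((n i : ℝ)) ^ 2 := by
            apply Finset.sum_le_sum
            intro i hi
            have hi' := Finset.mem_of_mem_erase hi
            simp only [Finset.mem_Icc] at hi'
            have hle : n r ≤ n i := hmono i r hi'.1 hi'.2 le_rfl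
            have hle' : (n r : ℝ) ≤ (n i : ℝ) := by exact_mod_cast hle
            nlinarith
    linarith [hsplit ▸ (by linarith : (n 1 : ℝ) ^ 2 + ((r : ℝ) - 1) * (n r : ℝ) ^ 2 ≤ (n 1 : ℝ) ^ 2 + ∑ i ∈ (Finset.Icc 1 r).erase 1, ((n i : ℝ)) ^ 2)]
  have hkey := key_quad (r : ℝ) (n 1 : ℝ) (n r : ℝ) (by exact_mod_cast hr) ha12 ht3
  have hrpos : (0 : ℝ) < (r : ℝ) := by positivity
  have hden : (0 : ℝ) < 3 * (r : ℝ) + 39 := by linarith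
  rw [gt_iff_lt, div_mul_eq_mul_div, lt_div_iff₀ hden]
  nlinarith [mul_pos hrpos (by linarith : (0:ℝ) < Q - (3 * (r:ℝ) + 40) * (n r : ℝ))]
end

section
/- Let r ≥ 2 be an integer and let n_1 ≥ n_2 ≥ … ≥ n_r > 0 be positive integers with n_1 ≥ 12. Then ((r+3)·r/(r+2)) · (n_1² + n_2² + … + n_r² − 1) > (n_1 + n_2 + … + n_r + 1/2)². -/
lemma key_ineq (ρ a t : ℝ) (hρ : 2 ≤ ρ) (ha : 12 ≤ a) :
    (ρ - 1) * (ρ + 2) * (a + t + 1/2)^2 < ρ * (ρ + 3) * ((ρ - 1) * (a^2 - 1)) + ρ * (ρ + 3) * t^2 := by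
  have hh : 0 < ρ * (a^2 - a - 9/4) - 2*a - 5/2 := by nlinarith [sq_nonneg (a - 12)]
  have hP : 0 < (ρ - 1) * (ρ * (ρ + 3)) * (ρ * (a^2 - a - 9/4) - 2*a - 5/2) := by
    apply mul_pos (mul_pos (by linarith) (by nlinarith)) hh
  have hA : (0:ℝ) < 2*ρ + 2 := by linarith
  nlinarith [sq_nonneg ((2*ρ+2)*t - (ρ-1)*(ρ+2)*(a+1/2)), hP, hA, sq_nonneg t]

/-- Lemma 3.7 of the paper: for `r ≥ 2` and positive integers
`n_1 ≥ n_2 ≥ … ≥ n_r > 0` with `n_1 ≥ 12`, we have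
`((r+3)·r/(r+2)) · (Σ n_i² − 1) > (Σ n_i + 1/2)²`. -/
theorem stmt_5 (r : ℕ) (hr : 2 ≤ r) (n : ℕ → ℤ)
    (hmono : ∀ i j, 1 ≤ i → i ≤ j → j ≤ r → n j ≤ n i)
    (hpos : ∀ i ∈ Finset.Icc 1 r, 0 < n i)
    (hn1 : 12 ≤ n 1) :
    ((r : ℝ) + 3) * (r : ℝ) / ((r : ℝ) + 2) *
        ((∑ i ∈ Finset.Icc 1 r, ((n i : ℝ)) ^ 2) - 1) >
      ((∑ i ∈ Finset.Icc 1 r, (n i : ℝ)) + 1 / 2) ^ 2 := by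
  have h1r : 1 ≤ r := by omega
  have hsplit : Finset.Icc 1 r = insert 1 (Finset.Icc 2 r) := by
    ext x; simp only [Finset.mem_Icc, Finset.mem_insert]; omega
  have h1not : (1:ℕ) ∉ Finset.Icc 2 r := by simp
  set a : ℝ := (n 1 : ℝ) with ha
  set T : ℝ := ∑ i ∈ Finset.Icc 2 r, (n i : ℝ) with hT
  set Q : ℝ := ∑ i ∈ Finset.Icc 2 r, (n i : ℝ)^2 with hQ
  have hS : ∑ i ∈ Finset.Icc 1 r, (n i:ℝ) = a + T := by
    rw [hsplit, Finset.sum_insert h1not]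
  have hQs : ∑ i ∈ Finset.Icc 1 r, (n i:ℝ)^2 = a^2 + Q := by
    rw [hsplit, Finset.sum_insert h1not]
  have hcauchy : T^2 ≤ ((r:ℝ) - 1) * Q := by
    have h := sq_sum_le_card_mul_sum_sq (s := Finset.Icc 2 r) (f := fun i => (n i : ℝ))
    have hc : ((Finset.Icc 2 r).card : ℝ) = (r:ℝ) - 1 := by
      rw [Nat.card_Icc]; push_cast [Nat.cast_sub h1r]; ring
    rw [hc] at h
    exact h
  have ha12 : (12:ℝ) ≤ a := by rw [ha]; exact_mod_cast hn1
  have hr2 : (2:ℝ) ≤ (r:ℝ) := by exact_mod_cast hr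
  have hkey := key_ineq (r:ℝ) a T hr2 ha12
  rw [hS, hQs, gt_iff_lt, div_mul_eq_mul_div, lt_div_iff₀ (by linarith)]
  nlinarith [hkey, mul_le_mul_of_nonneg_left hcauchy
    (by nlinarith : (0:ℝ) ≤ (r:ℝ)*((r:ℝ)+3)), sq_nonneg (a + T + 1/2)]
end

section
/- Let r ≥ 5 be an integer and let m_1, …, m_r and n_1, …, n_r be integers with m_i ≥ 2 and n_i ≥ 1 for all i. Set a = Σ_{i=1}^r (m_i+1)², b = Σ_{i=1}^r n_i², and c = Σ_{i=1}^r (m_i+1)·n_i. Then (r+3)·a·b ≥ (r+2)·(c+1)². -/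
/-- The arithmetic inequality in the proof of Theorem 3.1 of the paper: for
`r ≥ 5` and integers `m_i ≥ 2`, `n_i ≥ 1`, setting `a = Σ (m_i+1)²`,
`b = Σ n_i²` and `c = Σ (m_i+1)·n_i`, we have `(r+3)·a·b ≥ (r+2)·(c+1)²`. -/
theorem stmt_11 (r : ℕ) (hr : 5 ≤ r) (m n : ℕ → ℤ)
    (hm : ∀ i ∈ Finset.Icc 1 r, 2 ≤ m i)
    (hn : ∀ i ∈ Finset.Icc 1 r, 1 ≤ n i) :
    ((r : ℤ) + 3) * (∑ i ∈ Finset.Icc 1 r, (m i + 1) ^ 2) *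
        (∑ i ∈ Finset.Icc 1 r, (n i) ^ 2) ≥
      ((r : ℤ) + 2) * ((∑ i ∈ Finset.Icc 1 r, (m i + 1) * n i) + 1) ^ 2 := by
  set s := Finset.Icc 1 r
  set a := ∑ i ∈ s, (m i + 1) ^ 2 with ha
  set b := ∑ i ∈ s, (n i) ^ 2 with hb
  set c := ∑ i ∈ s, (m i + 1) * n i with hc
  have hcs : c ^ 2 ≤ a * b := Finset.sum_mul_sq_le_sq_mul_sq s _ _
  have hcard : s.card = r := by simp [s]
  have hclb : 3 * (r : ℤ) ≤ c := by
    calc 3 * (r : ℤ) = ∑ _i ∈ s, (3 : ℤ) := by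
          simp [hcard, mul_comm]
      _ ≤ c := Finset.sum_le_sum fun i hi => by
          have h1 := hm i hi
          have h2 := hn i hi
          nlinarith
  have hr' : (5 : ℤ) ≤ (r : ℤ) := by exact_mod_cast hr
  nlinarith [sq_nonneg c, sq_nonneg (c - 3 * (r : ℤ)), mul_nonneg (sub_nonneg.2 hr') (sub_nonneg.2 hclb)]
end

section
/- Let r ≥ 2 be an integer, let d and e be positive real numbers, let m_1, …, m_r be nonnegative real numbers, and let n_1 ≥ n_2 ≥ … ≥ n_r ≥ 1 be integers with n_1 ≥ 2. Assume that if r = 2 then (n_1, n_2) ≠ (2, 2), that (n_1, …, n_r) ≠ (2, 1, …, 1), and that it is not the case that r = 3 and (n_1, n_2, n_3) = (2, 2, 2). If d² ≥ ((r+3)/(r+2)) · Σ_{i=1}^r m_i² and e² ≥ Σ_{i=1}^r n_i² − n_r, then d·e > Σ_{i=1}^r m_i n_i. -/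
lemma key_int (r : ℕ) (hr : 2 ≤ r) (n : ℕ → ℤ)
    (hmono : ∀ i j, 1 ≤ i → i ≤ j → j ≤ r → n j ≤ n i)
    (hpos : ∀ i ∈ Finset.Icc 1 r, 1 ≤ n i)
    (hn1 : 2 ≤ n 1)
    (hr2 : r = 2 → ¬(n 1 = 2 ∧ n 2 = 2))
    (hne21 : ¬(n 1 = 2 ∧ ∀ i, 2 ≤ i → i ≤ r → n i = 1))
    (hne222 : ¬(r = 3 ∧ n 1 = 2 ∧ n 2 = 2 ∧ n 3 = 2)) :
    (∑ i ∈ Finset.Icc 1 r, (n i) ^ 2) ≥ ((r : ℤ) + 3) * n r + 1 := by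
  set t := n r with ht
  have ht1 : 1 ≤ t := hpos r (by simp [Finset.mem_Icc]; omega)
  have hn2t : t ≤ n 2 := hmono 2 r (by omega) hr le_rfl
  have hn12 : n 2 ≤ n 1 := hmono 1 2 le_rfl (by omega) hr
  have hn1t : t ≤ n 1 := le_trans hn2t hn12
  have hrZ : (2 : ℤ) ≤ (r : ℤ) := by exact_mod_cast hr
  have hsplit : Finset.Icc 1 r = insert 1 (insert 2 (Finset.Icc 3 r)) := by
    ext x; simp [Finset.mem_Icc, Finset.mem_insert]; omega
  have h1 : (1 : ℕ) ∉ insert 2 (Finset.Icc 3 r) := by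
    simp [Finset.mem_Icc]
  have h2 : (2 : ℕ) ∉ Finset.Icc 3 r := by simp
  rw [hsplit, Finset.sum_insert h1, Finset.sum_insert h2]
  have hcard : (Finset.Icc 3 r).card = r - 2 := by rw [Nat.card_Icc]; omega
  have h3 : ((r : ℤ) - 2) * t ^ 2 ≤ ∑ i ∈ Finset.Icc 3 r, n i ^ 2 := by
    have h := Finset.card_nsmul_le_sum (Finset.Icc 3 r) (fun i => n i ^ 2) (t ^ 2)
      (fun i hi => by
        simp [Finset.mem_Icc] at hi
        have : t ≤ n i := hmono i r (by omega) hi.2 le_rfl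
        exact pow_le_pow_left₀ (by omega) this 2)
    rw [hcard, nsmul_eq_mul] at h
    have hc : ((r - 2 : ℕ) : ℤ) = (r : ℤ) - 2 := by omega
    rwa [hc] at h
  -- case analysis
  rcases eq_or_lt_of_le ht1 with hteq | ht2
  · -- t = 1
    have htt : t = 1 := hteq.symm
    rw [htt] at h3 ⊢
    norm_num at h3 ⊢
    by_cases h12 : n 1 = 2
    · have hnB : ¬ (∀ i, 2 ≤ i → i ≤ r → n i = 1) := fun hB => hne21 ⟨h12, hB⟩
      push_neg at hnB
      obtain ⟨i, hi2, hir, hine⟩ := hnB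
      have hi1 : 1 ≤ n i := hpos i (by simp [Finset.mem_Icc]; omega)
      have hi2' : 2 ≤ n i := by omega
      have hn2i : n i ≤ n 2 := hmono 2 i (by omega) hi2 hir
      have hn2 : n 2 = 2 := by omega
      rw [h12, hn2]
      norm_num
      linarith
    · have hn13 : 3 ≤ n 1 := by omega
      have hn21 : 1 ≤ n 2 := by omega
      have h9 : 9 ≤ n 1 ^ 2 := by nlinarith
      have h1' : 1 ≤ n 2 ^ 2 := by nlinarith
      linarith
  · -- t ≥ 2
    rcases eq_or_lt_of_le (by omega : (2:ℤ) ≤ t) with hteq2 | ht3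
    · -- t = 2
      have ht2' : t = 2 := hteq2.symm
      rw [ht2'] at h3 hn1t hn2t ⊢
      have e1 : 4 ≤ n 1 ^ 2 := by nlinarith
      have e2 : 4 ≤ n 2 ^ 2 := by nlinarith
      by_cases hr4 : 4 ≤ r
      · have : (4 : ℤ) ≤ (r : ℤ) := by exact_mod_cast hr4
        nlinarith [h3]
      · interval_cases r
        · -- r = 2
          have hn2 : n 2 = 2 := by omega
          have hn13 : 3 ≤ n 1 := by
            rcases eq_or_lt_of_le hn1 with h | h
            · exact absurd ⟨h.symm, hn2⟩ (hr2 rfl)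
            · omega
          have h9 : 9 ≤ n 1 ^ 2 := by nlinarith
          have hs : ∑ x ∈ Finset.Icc 3 2, n x ^ 2 = 0 := by
            rw [Finset.Icc_eq_empty (by omega)]; simp
          rw [hs, hn2]; norm_num; linarith
        · -- r = 3
          have hn3 : n 3 = 2 := by omega
          have hn13 : 3 ≤ n 1 := by
            rcases eq_or_lt_of_le hn1 with h | h
            · have hn22 : n 2 = 2 := by omega
              exact absurd ⟨rfl, h.symm, hn22, hn3⟩ hne222
            · omega
          have h9 : 9 ≤ n 1 ^ 2 := by nlinarith
          have hs : ∑ x ∈ Finset.Icc 3 3, n x ^ 2 = 4 := by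
            rw [Finset.Icc_self, Finset.sum_singleton, hn3]; norm_num
          rw [hs]; norm_num; linarith
    · -- t ≥ 3
      have ht3' : (3 : ℤ) ≤ t := ht3
      have hA : (0:ℤ) ≤ ((r:ℤ) - 2) * (t^2 - t) := by
        apply mul_nonneg <;> nlinarith
      nlinarith [h3, hA, mul_nonneg (by omega : (0:ℤ) ≤ t - 3) (by omega : (0:ℤ) ≤ t)]


/-- The numerical core of Case A in the proof of Theorem 2.1 of the paper:
for `r ≥ 2`, positive reals `d, e`, nonnegative reals `m_i` and integers
`n_1 ≥ n_2 ≥ … ≥ n_r ≥ 1` with `n_1 ≥ 2`, excluding `(2,2)` when `r = 2`,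
`(2,1,…,1)`, and `(2,2,2)` when `r = 3`: if `d² ≥ ((r+3)/(r+2)) · Σ m_i²` and
`e² ≥ Σ n_i² − n_r`, then `d·e > Σ m_i n_i`. -/
theorem stmt_14 (r : ℕ) (hr : 2 ≤ r) (d e : ℝ) (hd : 0 < d) (he : 0 < e)
    (m : ℕ → ℝ) (n : ℕ → ℤ)
    (hm : ∀ i ∈ Finset.Icc 1 r, 0 ≤ m i)
    (hmono : ∀ i j, 1 ≤ i → i ≤ j → j ≤ r → n j ≤ n i)
    (hpos : ∀ i ∈ Finset.Icc 1 r, 1 ≤ n i)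
    (hn1 : 2 ≤ n 1)
    (hr2 : r = 2 → ¬(n 1 = 2 ∧ n 2 = 2))
    (hne21 : ¬(n 1 = 2 ∧ ∀ i, 2 ≤ i → i ≤ r → n i = 1))
    (hne222 : ¬(r = 3 ∧ n 1 = 2 ∧ n 2 = 2 ∧ n 3 = 2))
    (hd2 : d ^ 2 ≥ ((r : ℝ) + 3) / ((r : ℝ) + 2) *
      ∑ i ∈ Finset.Icc 1 r, (m i) ^ 2)
    (he2 : e ^ 2 ≥ (∑ i ∈ Finset.Icc 1 r, ((n i : ℝ)) ^ 2) - (n r : ℝ)) :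
    d * e > ∑ i ∈ Finset.Icc 1 r, m i * (n i : ℝ) := by
  set M : ℝ := ∑ i ∈ Finset.Icc 1 r, (m i) ^ 2 with hM
  set N : ℝ := ∑ i ∈ Finset.Icc 1 r, ((n i : ℝ)) ^ 2 with hN
  set C : ℝ := ∑ i ∈ Finset.Icc 1 r, m i * (n i : ℝ) with hC
  have hrR : (2 : ℝ) ≤ (r : ℝ) := by exact_mod_cast hr
  have hMnn : 0 ≤ M := Finset.sum_nonneg fun i _ => sq_nonneg _
  have hNnn : 0 ≤ N := Finset.sum_nonneg fun i _ => sq_nonneg _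
  have hCnn : 0 ≤ C := by
    apply Finset.sum_nonneg
    intro i hi
    have h1 := hpos i hi
    have h2 : (0 : ℝ) ≤ (n i : ℝ) := by exact_mod_cast (by omega : (0:ℤ) ≤ n i)
    exact mul_nonneg (hm i hi) h2
  have hCS : C ^ 2 ≤ M * N := Finset.sum_mul_sq_le_sq_mul_sq _ _ _
  have hkey := key_int r hr n hmono hpos hn1 hr2 hne21 hne222
  have hNkey : N ≥ ((r : ℝ) + 3) * ((n r : ℝ)) + 1 := by
    have : ((∑ i ∈ Finset.Icc 1 r, (n i) ^ 2 : ℤ) : ℝ) ≥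
        ((((r : ℤ) + 3) * n r + 1 : ℤ) : ℝ) := by exact_mod_cast hkey
    push_cast at this
    simpa [hN] using this
  have hnr1 : (1 : ℝ) ≤ (n r : ℝ) := by
    exact_mod_cast hpos r (by simp [Finset.mem_Icc]; omega)
  have hr2pos : (0 : ℝ) < (r : ℝ) + 2 := by linarith
  have hd2' : ((r : ℝ) + 2) * d ^ 2 ≥ ((r : ℝ) + 3) * M := by
    rw [ge_iff_le, div_mul_eq_mul_div, div_le_iff₀ hr2pos] at hd2
    linarith
  have hNr : 0 ≤ N - (n r : ℝ) := by nlinarith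
  have h1 : ((r : ℝ) + 2) * (d * e) ^ 2 ≥ (((r : ℝ) + 3) * M) * (N - (n r : ℝ)) := by
    calc ((r : ℝ) + 2) * (d * e) ^ 2 = (((r : ℝ) + 2) * d ^ 2) * e ^ 2 := by ring
      _ ≥ (((r : ℝ) + 3) * M) * e ^ 2 :=
          mul_le_mul_of_nonneg_right hd2' (sq_nonneg e)
      _ ≥ (((r : ℝ) + 3) * M) * (N - (n r : ℝ)) :=
          mul_le_mul_of_nonneg_left he2
            (mul_nonneg (by linarith) hMnn)
  have h2 : ((r : ℝ) + 3) * (N - (n r : ℝ)) ≥ ((r : ℝ) + 2) * N + 1 := by nlinarith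
  have h3 : (((r : ℝ) + 3) * M) * (N - (n r : ℝ)) ≥ M * (((r : ℝ) + 2) * N + 1) := by
    calc (((r : ℝ) + 3) * M) * (N - (n r : ℝ))
        = M * (((r : ℝ) + 3) * (N - (n r : ℝ))) := by ring
      _ ≥ M * (((r : ℝ) + 2) * N + 1) := mul_le_mul_of_nonneg_left h2 hMnn
  have hC2 : ((r : ℝ) + 2) * C ^ 2 ≤ ((r : ℝ) + 2) * (M * N) :=
    mul_le_mul_of_nonneg_left hCS (le_of_lt hr2pos)
  have hMN : M * (((r : ℝ) + 2) * N + 1) = ((r : ℝ) + 2) * (M * N) + M := by ring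
  have h4 : ((r : ℝ) + 2) * (d * e) ^ 2 ≥ ((r : ℝ) + 2) * C ^ 2 + M := by
    linarith [h1, h3, hC2, hMN]
  by_cases hM0 : M = 0
  · have hC0 : C = 0 := by
      have : C ^ 2 ≤ 0 := by rw [hM0] at hCS; simpa using hCS
      nlinarith [sq_nonneg C]
    rw [hC0]; exact mul_pos hd he
  · have hMpos : 0 < M := lt_of_le_of_ne hMnn (Ne.symm hM0)
    have h5 : C ^ 2 < (d * e) ^ 2 := by
      by_contra hcon
      push_neg at hcon
      have := mul_le_mul_of_nonneg_left hcon (le_of_lt hr2pos)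
      linarith
    exact lt_of_pow_lt_pow_left₀ 2 (le_of_lt (mul_pos hd he)) h5
end

section
/- Let r ≥ 9 be an integer, let n_1 ≥ n_2 ≥ … ≥ n_r ≥ 3 be integers with n_1 ≥ 12, and let d, e, m be positive real numbers. If e² ≥ Σ_{i=1}^r n_i² − n_r and d² ≥ ((3r+40)/(3r+39)) · r · m², then d·e > m · Σ_{i=1}^r n_i. -/
set_option maxHeartbeats 1600000

/-- The numerical argument of Case 2(iii) in the proof of Theorem 2.11 of the
paper: for `r ≥ 9`, integers `n_1 ≥ n_2 ≥ … ≥ n_r ≥ 3` with `n_1 ≥ 12` and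
positive reals `d, e, m`, if `e² ≥ Σ n_i² − n_r` and
`d² ≥ ((3r+40)/(3r+39)) · r · m²`, then `d·e > m · Σ n_i`. -/
theorem stmt_16 (r : ℕ) (hr : 9 ≤ r) (n : ℕ → ℤ)
    (hmono : ∀ i j, 1 ≤ i → i ≤ j → j ≤ r → n j ≤ n i)
    (h3 : ∀ i ∈ Finset.Icc 1 r, 3 ≤ n i)
    (hn1 : 12 ≤ n 1)
    (d e m : ℝ) (hd : 0 < d) (he : 0 < e) (hm : 0 < m)
    (he2 : e ^ 2 ≥ (∑ i ∈ Finset.Icc 1 r, ((n i : ℝ)) ^ 2) - (n r : ℝ))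
    (hd2 : d ^ 2 ≥ (3 * (r : ℝ) + 40) / (3 * (r : ℝ) + 39) * (r : ℝ) * m ^ 2) :
    d * e > m * ∑ i ∈ Finset.Icc 1 r, (n i : ℝ) := by
  obtain ⟨R, hRdef⟩ : ∃ R : ℝ, R = (r : ℝ) := ⟨_, rfl⟩
  obtain ⟨S, hSdef⟩ : ∃ S : ℝ, S = ∑ i ∈ Finset.Icc 1 r, ((n i : ℝ)) := ⟨_, rfl⟩
  obtain ⟨Q, hQdef⟩ : ∃ Q : ℝ, Q = ∑ i ∈ Finset.Icc 1 r, ((n i : ℝ)) ^ 2 := ⟨_, rfl⟩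
  obtain ⟨t, htdef⟩ : ∃ t : ℝ, t = ((n r : ℝ)) := ⟨_, rfl⟩
  obtain ⟨a, hadef⟩ : ∃ a : ℝ, a = ((n 1 : ℝ)) := ⟨_, rfl⟩
  rw [← hSdef]
  rw [← hQdef, ← htdef] at he2
  rw [← hRdef] at hd2
  have hR9 : (9:ℝ) ≤ R := by rw [hRdef]; exact_mod_cast hr
  have ha12 : (12:ℝ) ≤ a := by rw [hadef]; exact_mod_cast hn1
  have ht3 : (3:ℝ) ≤ t := by
    rw [htdef]
    exact_mod_cast h3 r (by simp [Finset.mem_Icc]; omega)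
  have hcard : (Finset.Icc 1 r).card = r := by rw [Nat.card_Icc]; omega
  -- Cauchy-Schwarz
  have hCS : S ^ 2 ≤ R * Q := by
    rw [hSdef, hQdef, hRdef]
    have := sq_sum_le_card_mul_sum_sq (s := Finset.Icc 1 r) (f := fun i => ((n i : ℝ)))
    simpa [hcard] using this
  -- Q ≥ a^2 + (R-1) t^2
  have hsplit : Finset.Icc 1 r = insert 1 (Finset.Icc 2 r) := by
    ext i; simp [Finset.mem_Icc]; omega
  have h1notin : (1:ℕ) ∉ Finset.Icc 2 r := by simp
  have hcard2 : (Finset.Icc 2 r).card = r - 1 := by rw [Nat.card_Icc]; omega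
  have hQ : a ^ 2 + (R - 1) * t ^ 2 ≤ Q := by
    rw [hQdef, hadef, hsplit, Finset.sum_insert h1notin]
    have hsum : ∑ _i ∈ Finset.Icc 2 r, t ^ 2 ≤ ∑ i ∈ Finset.Icc 2 r, ((n i : ℝ)) ^ 2 := by
      apply Finset.sum_le_sum
      intro i hi
      simp only [Finset.mem_Icc] at hi
      have hni : t ≤ (n i : ℝ) := by
        rw [htdef]; exact_mod_cast hmono i r (by omega) hi.2 le_rfl
      nlinarith
    rw [Finset.sum_const, hcard2, nsmul_eq_mul] at hsum
    have hcast : ((r - 1 : ℕ) : ℝ) = R - 1 := by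
      rw [hRdef]; have h1 : (1:ℕ) ≤ r := by omega
      push_cast [h1]; ring
    rw [hcast] at hsum
    linarith
  -- f(t) > 0
  have hR1 : (0:ℝ) < R - 1 := by linarith
  have hf : (0:ℝ) < 144 + (R - 1) * t ^ 2 - (3 * R + 40) * t := by
    rcases le_or_gt R 15 with hr15 | hr15
    · have hsq := sq_nonneg (2 * (R - 1) * t - (3 * R + 40))
      have hquad : (0:ℝ) ≤ (R - 9) * (15 - R) :=
        mul_nonneg (by linarith) (by linarith)
      have hpos : 0 < 4 * (R - 1) * (144 + (R - 1) * t ^ 2 - (3 * R + 40) * t) := by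
        nlinarith
      by_contra hc
      push_neg at hc
      have := mul_nonpos_of_nonneg_of_nonpos (by linarith : (0:ℝ) ≤ 4 * (R - 1)) hc
      linarith
    · have h16 : (16:ℝ) ≤ R := by
        rw [hRdef] at hr15 ⊢
        have : 15 < r := by exact_mod_cast hr15
        exact_mod_cast (by omega : 16 ≤ r)
      have hb : (0:ℝ) ≤ (R - 1) * (t + 3) - (3 * R + 40) := by
        nlinarith [mul_nonneg (by linarith : (0:ℝ) ≤ R - 1) (by linarith : (0:ℝ) ≤ t - 3)]
      nlinarith [mul_nonneg (by linarith : (0:ℝ) ≤ t - 3) hb]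
  -- key inequality
  have hRpos : (0:ℝ) < R := by linarith
  have ha2 : (144:ℝ) ≤ a ^ 2 := by nlinarith [sq_nonneg (a - 12)]
  have h2 : 0 < Q - (3 * R + 40) * t := by linarith
  have key : (3 * R + 39) * S ^ 2 < (3 * R + 40) * R * (Q - t) := by
    have p1 := mul_nonneg (by linarith : (0:ℝ) ≤ 3 * R + 39) (by linarith : 0 ≤ R * Q - S ^ 2)
    have p2 := mul_pos hRpos h2
    nlinarith [p1, p2]
  -- positivity of S, Q - t
  have hSpos : 0 < S := by
    have hs : ∑ _i ∈ Finset.Icc 1 r, (3:ℝ) ≤ S := by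
      rw [hSdef]
      apply Finset.sum_le_sum
      intro i hi
      exact_mod_cast h3 i hi
    rw [Finset.sum_const, hcard, nsmul_eq_mul] at hs
    have : (9:ℝ) ≤ (r:ℝ) := by exact_mod_cast hr
    nlinarith
  have hQt : 0 < Q - t := by nlinarith
  have hden : 0 < 3 * R + 39 := by linarith
  have hfrac : S ^ 2 < (3 * R + 40) / (3 * R + 39) * R * (Q - t) := by
    rw [div_mul_eq_mul_div, div_mul_eq_mul_div, lt_div_iff₀ hden]
    nlinarith [key]
  have hde : (m * S) ^ 2 < (d * e) ^ 2 := by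
    have hx : 0 ≤ (3 * R + 40) / (3 * R + 39) * R * m ^ 2 := by positivity
    have h1 : (3 * R + 40) / (3 * R + 39) * R * m ^ 2 * (Q - t) ≤ d ^ 2 * e ^ 2 :=
      mul_le_mul hd2 he2 (le_of_lt hQt) (by positivity)
    have hmm := mul_lt_mul_of_pos_left hfrac (by positivity : (0:ℝ) < m ^ 2)
    calc (m * S) ^ 2 = m ^ 2 * S ^ 2 := by ring
      _ < m ^ 2 * ((3 * R + 40) / (3 * R + 39) * R * (Q - t)) := hmm
      _ = (3 * R + 40) / (3 * R + 39) * R * m ^ 2 * (Q - t) := by ring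
      _ ≤ d ^ 2 * e ^ 2 := h1
      _ = (d * e) ^ 2 := by ring
  have := lt_of_pow_lt_pow_left₀ 2 (le_of_lt (mul_pos hd he)) hde
  linarith
end
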